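/- Let X₁,…,Xₙ be ℕ-valued random variables on a probability space with S = X₁+⋯+Xₙ and S₋₁ = X₂+⋯+Xₙ. Suppose X₁ follows a Katz distribution with parameters a and b, where |a| < 1 and b > 0, and that X₁ is independent of S₋₁. Then for every integer k ≥ 1, E[X₁ · 1_{\{S=k\}}] = (a+b) · ∑_{j=0}^{k−1} a^j · P(S = k−1−j). -/

import Mathlib

open MeasureTheory ProbabilityTheory

private lemma katz_core (a b : ℝ) (f g h : ℕ → ℝ)
    (hf : ∀ i : ℕ, ((i : ℝ) + 1) * f (i + 1) = (a * ((i : ℝ) + 1) + b) * f i)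
    (hh : ∀ m, h m = ∑ i ∈ Finset.range (m + 1), f i * g (m - i)) :
    ∀ k, ∑ i ∈ Finset.range (k + 1), (i : ℝ) * (f i * g (k - i))
      = (a + b) * ∑ j ∈ Finset.range k, a ^ j * h (k - 1 - j) := by
  intro k
  induction k with
  | zero => simp
  | succ k IH =>
      rw [Finset.sum_range_succ' (fun i => (i : ℝ) * (f i * g (k + 1 - i)))]
      have hstep : ∑ i ∈ Finset.range (k + 1),
          ((i : ℝ) + 1) * (f (i + 1) * g (k + 1 - (i + 1)))
          = a * (∑ i ∈ Finset.range (k + 1), (i : ℝ) * (f i * g (k - i))) + (a + b) * h k := by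
        rw [hh k, Finset.mul_sum, Finset.mul_sum, ← Finset.sum_add_distrib]
        refine Finset.sum_congr rfl fun i _ => ?_
        have hsub : k + 1 - (i + 1) = k - i := by omega
        rw [hsub, show ((i : ℝ) + 1) * (f (i + 1) * g (k - i))
            = (((i : ℝ) + 1) * f (i + 1)) * g (k - i) by ring, hf i]
        ring
      push_cast at hstep ⊢
      rw [hstep, IH]
      have he : ∀ j : ℕ, k - (j + 1) = k - 1 - j := by omega
      have hr : ∑ x ∈ Finset.range (k + 1), a ^ x * h (k - x)
          = a * (∑ j ∈ Finset.range k, a ^ j * h (k - 1 - j)) + h k := by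
        rw [Finset.sum_range_succ' (fun j => a ^ j * h (k - j)), Finset.mul_sum]
        simp only [pow_zero, one_mul, Nat.sub_zero]
        congr 1
        refine Finset.sum_congr rfl fun j _ => ?_
        rw [he j]; ring
      rw [hr]
      ring

/-- If `X₁` follows a Katz distribution with parameters `|a| < 1`, `b > 0`
and is independent of `S₋₁`, then for every `k ≥ 1`,
`E[X₁ · 1_{S=k}] = (a+b) ∑_{j=0}^{k-1} a^j P(S = k-1-j)`. -/
theorem expected_allocation_katz
    {Ω : Type*} [MeasurableSpace Ω] (μ : Measure Ω) [IsProbabilityMeasure μ]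
    (n : ℕ) (X : Fin (n + 1) → Ω → ℕ) (hX : ∀ i, Measurable (X i))
    (S Sm : Ω → ℕ)
    (hS : ∀ ω, S ω = ∑ i, X i ω)
    (hSm : ∀ ω, Sm ω = ∑ i : Fin n, X i.succ ω)
    (a b : ℝ) (ha : |a| < 1) (hb : 0 < b)
    (hkatz : ∀ k : ℕ, (μ {ω | X 0 ω = k + 1}).toReal
      = (a + b / (k + 1)) * (μ {ω | X 0 ω = k}).toReal)
    (hindep : IndepFun (X 0) Sm μ) :
    ∀ k : ℕ, 1 ≤ k →
      ∫ ω in {ω | S ω = k}, (X 0 ω : ℝ) ∂μ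
        = (a + b) * ∑ j ∈ Finset.range k, a ^ j * (μ {ω | S ω = k - 1 - j}).toReal := by
  -- basic measurability
  have hSm_meas : Measurable Sm := by
    have : Sm = fun ω => ∑ i : Fin n, X i.succ ω := funext hSm
    rw [this]
    exact Finset.measurable_sum _ fun i _ => hX i.succ
  have hS' : ∀ ω, S ω = X 0 ω + Sm ω := by
    intro ω
    rw [hS ω, hSm ω, Fin.sum_univ_succ]
  -- sets
  set A : ℕ → Set Ω := fun i => {ω | X 0 ω = i} with hA
  set B : ℕ → Set Ω := fun m => {ω | Sm ω = m} with hB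
  have measA : ∀ i, MeasurableSet (A i) := fun i => hX 0 (measurableSet_singleton i)
  have measB : ∀ m, MeasurableSet (B m) := fun m => hSm_meas (measurableSet_singleton m)
  -- independence on singletons
  have hmul : ∀ i m, μ (A i ∩ B m) = μ (A i) * μ (B m) := fun i m =>
    hindep.measure_inter_preimage_eq_mul {i} {m}
      (measurableSet_singleton i) (measurableSet_singleton m)
  -- decomposition of {S = k}
  have hdecomp : ∀ k : ℕ, {ω | S ω = k} = ⋃ i ∈ Finset.range (k + 1), A i ∩ B (k - i) := by
    intro k
    ext ω
    simp only [Set.mem_setOf_eq, Set.mem_iUnion, Finset.mem_range, Set.mem_inter_iff, hA, hB,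
      Set.mem_setOf_eq]
    constructor
    · intro hω
      have h := hS' ω
      exact ⟨X 0 ω, by omega, rfl, by omega⟩
    · rintro ⟨i, hi, h1, h2⟩
      have := hS' ω; omega
  have hdisj : ∀ k : ℕ, Set.Pairwise ↑(Finset.range (k + 1))
      (Function.onFun Disjoint fun i => A i ∩ B (k - i)) := by
    intro k i _ j _ hij
    refine Set.disjoint_left.2 fun ω hωi hωj => hij ?_
    have h1 : X 0 ω = i := hωi.1
    have h2 : X 0 ω = j := hωj.1
    omega
  -- measure of {S = k} as convolution
  have hconv : ∀ k : ℕ, (μ {ω | S ω = k}).toReal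
      = ∑ i ∈ Finset.range (k + 1), (μ (A i)).toReal * (μ (B (k - i))).toReal := by
    intro k
    rw [hdecomp k, measure_biUnion_finset (hdisj k)
      (fun i _ => (measA i).inter (measB (k - i))), ENNReal.toReal_sum
      (fun i _ => measure_ne_top μ _)]
    exact Finset.sum_congr rfl fun i _ => by rw [hmul, ENNReal.toReal_mul]
  -- integral as weighted sum
  have hint : ∀ k : ℕ, ∫ ω in {ω | S ω = k}, (X 0 ω : ℝ) ∂μ
      = ∑ i ∈ Finset.range (k + 1), (i : ℝ) * ((μ (A i)).toReal * (μ (B (k - i))).toReal) := by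
    intro k
    rw [hdecomp k, integral_biUnion_finset _ (fun i _ => (measA i).inter (measB (k - i)))
      (hdisj k) (fun i _ => ?_)]
    · refine Finset.sum_congr rfl fun i _ => ?_
      rw [setIntegral_congr_fun ((measA i).inter (measB (k - i)))
        (g := fun _ => (i : ℝ)) (fun ω hω => by
          have h1 : X 0 ω = i := hω.1
          simp [h1]),
        setIntegral_const, Measure.real_def, hmul, ENNReal.toReal_mul, smul_eq_mul]
      ring
    · exact (integrableOn_const (C := (i : ℝ)) (measure_ne_top μ _)).congr_fun
        (g := fun ω => (X 0 ω : ℝ)) (fun ω hω => by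
          have h1 : X 0 ω = i := hω.1
          simp [h1])
        ((measA i).inter (measB (k - i)))
  -- Katz recursion in multiplied form
  have hf : ∀ i : ℕ, ((i : ℝ) + 1) * (μ (A (i + 1))).toReal
      = (a * ((i : ℝ) + 1) + b) * (μ (A i)).toReal := by
    intro i
    have h := hkatz i
    have hpos : ((i : ℝ) + 1) ≠ 0 := by positivity
    rw [hA]
    push_cast at h ⊢
    rw [h]
    field_simp
  intro k _
  rw [hint k]
  simp only [← mul_assoc] at *
  have := katz_core a b (fun i => (μ (A i)).toReal) (fun m => (μ (B m)).toReal)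
    (fun m => (μ {ω | S ω = m}).toReal) hf hconv k
  rw [← this]
  exact Finset.sum_congr rfl fun i _ => by ring
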